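/- Let u(x) = x^n + B·x + C ∈ ℤ[x] be a monic polynomial of degree n > 1 with B ≠ 0, C ≠ 0, and without multiple roots. Let ℓ be a prime such that ℓ does not divide gcd(B,C), ℓ does not divide gcd(n,B), and ℓ does not divide gcd(n−1,C). Let ū(x) = u(x) mod ℓ ∈ 𝔽_ℓ[x]. Then: (a) ū(x) has at most one multiple root in an algebraic closure of 𝔽_ℓ; (b) if such a multiple root γ exists, then ℓ does not divide n(n−1)BC, γ is a double root (multiplicity exactly 2) of ū(x), and γ is a nonzero element of 𝔽_ℓ. -/

import Mathlib

open Polynomial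

noncomputable section

/-- Key Lemma (2)(a),(b): let `u(x) = x^n + B·x + C ∈ ℤ[x]` be monic of degree `n > 1` with
`B ≠ 0`, `C ≠ 0` and without multiple roots, and let `ℓ` be a prime not dividing any of
`gcd(B,C)`, `gcd(n,B)`, `gcd(n-1,C)`.  Then the reduction `ū = u mod ℓ ∈ 𝔽_ℓ[x]` has at
most one multiple root in an algebraic closure of `𝔽_ℓ`, and if a multiple root `γ`
exists then `ℓ ∤ n(n-1)BC`, `γ` is a double root (multiplicity exactly `2`), and `γ` is a
nonzero element of `𝔽_ℓ`. -/
theorem trinomial_reduction_at_most_one_double_root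
    (n : ℕ) (hn : 1 < n) (B C : ℤ) (hB : B ≠ 0) (hC : C ≠ 0)
    (hsep : ∀ x : AlgebraicClosure ℚ,
      ((X ^ n + Polynomial.C B * X + Polynomial.C C : ℤ[X]).map
          (algebraMap ℤ (AlgebraicClosure ℚ))).rootMultiplicity x ≤ 1)
    (ℓ : ℕ) [Fact ℓ.Prime]
    (h₁ : ¬ (ℓ ∣ Int.gcd B C))
    (h₂ : ¬ (ℓ ∣ Int.gcd (n : ℤ) B))
    (h₃ : ¬ (ℓ ∣ Int.gcd ((n : ℤ) - 1) C)) :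
    (∀ x y : AlgebraicClosure (ZMod ℓ),
      2 ≤ ((X ^ n + Polynomial.C B * X + Polynomial.C C : ℤ[X]).map
            (Int.castRingHom (AlgebraicClosure (ZMod ℓ)))).rootMultiplicity x →
      2 ≤ ((X ^ n + Polynomial.C B * X + Polynomial.C C : ℤ[X]).map
            (Int.castRingHom (AlgebraicClosure (ZMod ℓ)))).rootMultiplicity y →
      x = y) ∧
    (∀ γ : AlgebraicClosure (ZMod ℓ),
      2 ≤ ((X ^ n + Polynomial.C B * X + Polynomial.C C : ℤ[X]).map
            (Int.castRingHom (AlgebraicClosure (ZMod ℓ)))).rootMultiplicity γ →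
      ¬ ((ℓ : ℤ) ∣ (n : ℤ) * ((n : ℤ) - 1) * B * C) ∧
      ((X ^ n + Polynomial.C B * X + Polynomial.C C : ℤ[X]).map
          (Int.castRingHom (AlgebraicClosure (ZMod ℓ)))).rootMultiplicity γ = 2 ∧
      ∃ γ₀ : ZMod ℓ, γ₀ ≠ 0 ∧
        algebraMap (ZMod ℓ) (AlgebraicClosure (ZMod ℓ)) γ₀ = γ) := by
  set F := AlgebraicClosure (ZMod ℓ)
  have hchar : CharP F ℓ := inferInstance
  set q : F[X] := ((X ^ n + Polynomial.C B * X + Polynomial.C C : ℤ[X]).map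
      (Int.castRingHom F)) with hqdef
  have hq : q = X ^ n + Polynomial.C ((B : ℤ) : F) * X + Polynomial.C ((C : ℤ) : F) := by
    simp [hqdef, Polynomial.map_add, Polynomial.map_pow, Polynomial.map_mul, Polynomial.C_eq_intCast]
  have hqne : q ≠ 0 := by
    have hm : (X ^ n + (Polynomial.C B * X + Polynomial.C C) : ℤ[X]).Monic := by
      apply monic_X_pow_add
      calc (Polynomial.C B * X + Polynomial.C C).degree ≤ 1 := degree_linear_le
        _ < (n : WithBot ℕ) := by exact_mod_cast Nat.one_lt_cast.mpr hn
    rw [hqdef, add_assoc]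
    exact (hm.map (Int.castRingHom F)).ne_zero
  -- cast facts
  have hcast : ∀ m : ℤ, ((m : F) = 0 ↔ (ℓ : ℤ) ∣ m) := fun m =>
    CharP.intCast_eq_zero_iff F ℓ m
  have hdvd1 : ¬ ((ℓ : ℤ) ∣ B ∧ (ℓ : ℤ) ∣ C) := fun ⟨ha, hb⟩ =>
    h₁ (Int.natCast_dvd_natCast.mp (Int.dvd_coe_gcd ha hb))
  have hdvd2 : ¬ ((ℓ : ℤ) ∣ (n : ℤ) ∧ (ℓ : ℤ) ∣ B) := fun ⟨ha, hb⟩ =>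
    h₂ (Int.natCast_dvd_natCast.mp (Int.dvd_coe_gcd ha hb))
  have hdvd3 : ¬ ((ℓ : ℤ) ∣ ((n : ℤ) - 1) ∧ (ℓ : ℤ) ∣ C) := fun ⟨ha, hb⟩ =>
    h₃ (Int.natCast_dvd_natCast.mp (Int.dvd_coe_gcd ha hb))
  have hnn : (((n : ℤ)) : F) = ((n : ℕ) : F) := by push_cast; ring
  have main : ∀ γ : F, 2 ≤ q.rootMultiplicity γ →
      ((B : F) * ((n : F) - 1) ≠ 0) ∧
      ((B : F) * ((n : F) - 1) * γ = -((n : F) * (C : F))) ∧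
      (¬ ((ℓ : ℤ) ∣ (n : ℤ) * ((n : ℤ) - 1) * B * C)) ∧
      (q.rootMultiplicity γ = 2) ∧
      (∃ γ₀ : ZMod ℓ, γ₀ ≠ 0 ∧ algebraMap (ZMod ℓ) F γ₀ = γ) := by
    intro γ hγ
    have hroots := (one_lt_rootMultiplicity_iff_isRoot hqne).mp (lt_of_lt_of_le one_lt_two hγ)
    have e0 : γ ^ (n - 1) * γ + (B : F) * γ + (C : F) = 0 := by
      have := hroots.1
      rw [hq] at this
      simp only [IsRoot, eval_add, eval_pow, eval_mul, eval_C, eval_X] at this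
      rw [← this, ← pow_succ, Nat.sub_add_cancel (by omega)]
    have hder : derivative q = Polynomial.C ((n : ℕ) : F) * X ^ (n - 1)
        + Polynomial.C ((B : ℤ) : F) := by
      rw [hq]
      simp [derivative_X_pow, Polynomial.C_eq_natCast]
    have e1 : ((n : ℕ) : F) * γ ^ (n - 1) + (B : F) = 0 := by
      have := hroots.2
      rw [hder] at this
      simpa [IsRoot] using this
    -- nonvanishing of n
    have hn0 : ((n : ℕ) : F) ≠ 0 := by
      intro h
      have hBF : (B : F) = 0 := by rw [h, zero_mul, zero_add] at e1; exact e1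
      exact hdvd2 ⟨(hcast _).mp (by rw [hnn]; exact h), (hcast _).mp hBF⟩
    have key : (B : F) * ((n : F) - 1) * γ = -((n : F) * (C : F)) := by
      linear_combination ((n : ℕ) : F) * e0 - γ * e1
    have hB0 : (B : F) ≠ 0 := by
      intro h
      have hγ0 : γ = 0 := by
        have : ((n:ℕ):F) * γ ^ (n-1) = 0 := by linear_combination e1 - h
        have := (mul_eq_zero.mp this).resolve_left hn0
        exact pow_eq_zero_iff (by omega) |>.mp this
      have hCF : (C : F) = 0 := by
        rw [hγ0] at e0; simpa using e0
      exact hdvd1 ⟨(hcast _).mp h, (hcast _).mp hCF⟩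
    have hn1 : ((n : F) - 1) ≠ 0 := by
      intro h
      have hCF : (C : F) = 0 := by
        have : (n : F) * (C : F) = 0 := by
          have := key; rw [h] at this; simpa using this.symm
        exact (mul_eq_zero.mp this).resolve_left hn0
      refine hdvd3 ⟨(hcast _).mp ?_, (hcast _).mp hCF⟩
      push_cast
      exact h
    have hC0 : (C : F) ≠ 0 := by
      intro h
      have hγ0 : γ = 0 := by
        have : (B : F) * ((n : F) - 1) * γ = 0 := by rw [key, h]; ring
        exact (mul_eq_zero.mp this).resolve_left (mul_ne_zero hB0 hn1)
      rw [hγ0] at e1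
      rw [zero_pow (by omega : n - 1 ≠ 0)] at e1
      simp at e1
      exact hB0 e1
    have hBn1 : (B : F) * ((n : F) - 1) ≠ 0 := mul_ne_zero hB0 hn1
    have hγ0 : γ ≠ 0 := by
      intro h
      rw [h, mul_zero] at key
      exact mul_ne_zero hn0 hC0 (by linear_combination key)
    refine ⟨hBn1, key, ?_, ?_, ?_⟩
    · -- not dvd product
      intro hdvd
      have : (((n : ℤ) * ((n : ℤ) - 1) * B * C : ℤ) : F) = 0 := (hcast _).mpr hdvd
      push_cast at this
      exact mul_ne_zero (mul_ne_zero (mul_ne_zero hn0 hn1) hB0) hC0 this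
    · -- multiplicity exactly 2
      refine le_antisymm ?_ hγ
      by_contra h'
      push_neg at h'
      have h2 : 2 < q.rootMultiplicity γ := h'
      have := isRoot_iterate_derivative_of_lt_rootMultiplicity h2
      have this2 : (derivative (derivative q)).IsRoot γ := by
        simpa only [show (2:ℕ) = 1 + 1 from rfl, Function.iterate_add_apply,
          Function.iterate_one] using this
      rw [hder] at this2
      replace this := this2
      have hd2 : derivative (Polynomial.C ((n:ℕ):F) * X ^ (n-1) + Polynomial.C ((B:ℤ):F))
          = Polynomial.C ((n:ℕ):F) * (Polynomial.C (((n-1 : ℕ)):F) * X ^ (n - 1 - 1)) := by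
        simp [derivative_X_pow, Polynomial.C_eq_natCast]
      rw [hd2] at this
      simp only [IsRoot, eval_mul, eval_C, eval_pow, eval_X] at this
      have hn1' : (((n - 1 : ℕ)) : F) ≠ 0 := by
        rw [Nat.cast_sub (by omega), Nat.cast_one]
        exact hn1
      exact (mul_ne_zero hn0 (mul_ne_zero hn1' (pow_ne_zero _ hγ0))) this
    · -- γ in prime field
      refine ⟨-((n : ZMod ℓ) * (C : ZMod ℓ)) / ((B : ZMod ℓ) * ((n : ZMod ℓ) - 1)), ?_, ?_⟩
      · intro h
        apply hγ0
        have himg : algebraMap (ZMod ℓ) F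
            (-((n : ZMod ℓ) * (C : ZMod ℓ)) / ((B : ZMod ℓ) * ((n : ZMod ℓ) - 1))) = γ := by
          rw [map_div₀]
          simp only [map_neg, map_mul, map_sub, map_one, map_natCast, map_intCast]
          rw [eq_comm, eq_div_iff hBn1]
          linear_combination key
        rw [h] at himg
        simpa using himg.symm
      · rw [map_div₀]
        simp only [map_neg, map_mul, map_sub, map_one, map_natCast, map_intCast]
        rw [eq_comm, eq_div_iff hBn1]
        linear_combination key
  constructor
  · intro x y hx hy
    obtain ⟨hBn1, keyx, -⟩ := main x hx
    obtain ⟨-, keyy, -⟩ := main y hy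
    exact mul_left_cancel₀ hBn1 (keyx.trans keyy.symm)
  · intro γ hγ
    obtain ⟨-, -, h1, h2, h3⟩ := main γ hγ
    exact ⟨h1, h2, h3⟩
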